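/- arXiv:1611.09005 — 2 statements merged into one kernel-verified Lean document; each statement's English description precedes it below -/
import Mathlib

section
/- If C_S : R^d → R is a continuous positive definite function (covariance) and V is a random vector in R^d with distribution independent of the field, then the function C(h,u) = E[C_S(h − uV)] is a positive definite function on R^d × R (i.e., a valid space-time covariance). -/
open MeasureTheory

/-- If `C_S` is a continuous positive definite function on `ℝ^d` and `V` a random
vector, then the transport covariance `C(h,u) = E[C_S(h - u V)]` is positive definite on
`ℝ^d × ℝ`. -/
theorem transport_covariance_posDef {d : ℕ} {Ω : Type*} [MeasurableSpace Ω]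
    (P : Measure Ω) [IsProbabilityMeasure P]
    (C_S : (Fin d → ℝ) → ℝ) (hcont : Continuous C_S)
    (hpd : ∀ (n : ℕ) (x : Fin n → Fin d → ℝ) (a : Fin n → ℝ),
      0 ≤ ∑ i, ∑ j, a i * a j * C_S (x i - x j))
    (V : Ω → Fin d → ℝ) (hV : Measurable V)
    (hint : ∀ (h : Fin d → ℝ) (u : ℝ), Integrable (fun ω => C_S (h - u • V ω)) P)
    (C : (Fin d → ℝ) → ℝ → ℝ)
    (hC : ∀ h u, C h u = ∫ ω, C_S (h - u • V ω) ∂P) :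
    ∀ (n : ℕ) (x : Fin n → Fin d → ℝ) (t : Fin n → ℝ) (a : Fin n → ℝ),
      0 ≤ ∑ i, ∑ j, a i * a j * C (x i - x j) (t i - t j) := by
  intro n x t a
  have hint' : ∀ i j : Fin n,
      Integrable (fun ω => a i * a j * C_S (x i - x j - (t i - t j) • V ω)) P :=
    fun i j => (hint (x i - x j) (t i - t j)).const_mul _
  have heq : ∀ (i j : Fin n) (ω : Ω),
      x i - x j - (t i - t j) • V ω = (x i - t i • V ω) - (x j - t j • V ω) := by
    intro i j ω
    rw [sub_smul]
    abel
  have hpt : ∀ ω : Ω,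
      0 ≤ ∑ i, ∑ j, a i * a j * C_S (x i - x j - (t i - t j) • V ω) := by
    intro ω
    simp_rw [heq]
    exact hpd n (fun i => x i - t i • V ω) a
  have h1 : ∀ i : Fin n,
      (∑ j, ∫ ω, a i * a j * C_S (x i - x j - (t i - t j) • V ω) ∂P) =
        ∫ ω, ∑ j, a i * a j * C_S (x i - x j - (t i - t j) • V ω) ∂P :=
    fun i => (integral_finset_sum _ (fun j _ => hint' i j)).symm
  calc ∑ i, ∑ j, a i * a j * C (x i - x j) (t i - t j)
      = ∑ i, ∑ j, ∫ ω, a i * a j * C_S (x i - x j - (t i - t j) • V ω) ∂P := by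
        simp_rw [hC, ← integral_const_mul]
    _ = ∫ ω, ∑ i, ∑ j, a i * a j * C_S (x i - x j - (t i - t j) • V ω) ∂P := by
        simp_rw [h1]
        exact (integral_finset_sum _
          (fun i _ => integrable_finset_sum _ (fun j _ => hint' i j))).symm
    _ ≥ 0 := integral_nonneg hpt
end

section
/- Let ψ_S be continuous on [−1,1] and twice differentiable on (−1,1), ω uniformly distributed on S², and define ψ(θ,u) = E[ψ_S(x^T R_ω(uα) y)] where θ = arccos(x^T y) ∈ (0,π). Then ∂ψ/∂u(θ,0) = 0 and ∂²ψ/∂u²(θ,0) = (α²/3){ψ_S''(cos θ) sin²θ − 2 ψ_S'(cos θ) cos θ}. Consequently, for the linear covariance ψ_S(c) = c, the transport covariance equals ψ(θ,u) = (1 + 2cos(uα)) cos(θ)/3, and the dimple indicator −2cos θ is negative on (0, π/2) and positive on (π/2, π). -/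
open MeasureTheory Matrix Set


section SphereAux

/-- coordinates of a unit vector are bounded by 1 -/
lemma sphAux_abs1 (v : Fin 3 → ℝ) (h : v 0 ^ 2 + v 1 ^ 2 + v 2 ^ 2 = 1) :
    ∀ i : Fin 3, |v i| ≤ 1 := by
  intro i
  fin_cases i
  · show |v 0| ≤ 1
    rw [abs_le]; constructor <;> nlinarith [sq_nonneg (v 0), sq_nonneg (v 1), sq_nonneg (v 2)]
  · show |v 1| ≤ 1
    rw [abs_le]; constructor <;> nlinarith [sq_nonneg (v 0), sq_nonneg (v 1), sq_nonneg (v 2)]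
  · show |v 2| ≤ 1
    rw [abs_le]; constructor <;> nlinarith [sq_nonneg (v 0), sq_nonneg (v 1), sq_nonneg (v 2)]

lemma sphAux_cos_lip (t : ℝ) : |Real.cos t - 1| ≤ |t| := by
  have h1 : Real.cos t = 2 * Real.cos (t / 2) ^ 2 - 1 := by
    rw [← Real.cos_two_mul]; congr 1; ring
  have h2 := Real.sin_sq_add_cos_sq (t / 2)
  have h3 : |Real.sin (t / 2)| ≤ |t / 2| := Real.abs_sin_le_abs
  have h4 : |Real.sin (t / 2)| ≤ 1 := Real.abs_sin_le_one _
  have h5 : Real.cos t - 1 = -(2 * Real.sin (t / 2) ^ 2) := by rw [h1]; nlinarith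
  rw [h5, abs_neg, abs_of_nonneg (by positivity : (0:ℝ) ≤ 2 * Real.sin (t / 2) ^ 2)]
  have h6 : |t / 2| = |t| / 2 := by rw [abs_div]; norm_num
  nlinarith [sq_abs (Real.sin (t / 2)), mul_le_mul h4 h3 (abs_nonneg _) zero_le_one,
    abs_nonneg t]

lemma sphAux_term_bound {p q r s t : ℝ} (hp : |p| ≤ 1) (hq : |q| ≤ 1) (hr : |r| ≤ 1)
    (hs : |s| ≤ 1) (ht : |t| ≤ 1) : |(p * q - r * s) * t| ≤ 2 := by
  have h1 : |p * q| ≤ 1 := by rw [abs_mul]; exact mul_le_one₀ hp (abs_nonneg _) hq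
  have h2 : |r * s| ≤ 1 := by rw [abs_mul]; exact mul_le_one₀ hr (abs_nonneg _) hs
  have h3 : |p * q - r * s| ≤ 2 := (abs_sub _ _).trans (by linarith)
  calc |(p * q - r * s) * t| = |p * q - r * s| * |t| := abs_mul _ _
    _ ≤ 2 * 1 := mul_le_mul h3 ht (abs_nonneg _) (by norm_num)
    _ = 2 := by norm_num

lemma sphAux_lin_bound {p q r a b c : ℝ} (hp : |p| ≤ 1) (hq : |q| ≤ 1) (hr : |r| ≤ 1)
    (ha : |a| ≤ 1) (hb : |b| ≤ 1) (hc : |c| ≤ 1) : |p * a + q * b + r * c| ≤ 3 := by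
  have h1 : |p * a| ≤ 1 := by rw [abs_mul]; exact mul_le_one₀ hp (abs_nonneg _) ha
  have h2 : |q * b| ≤ 1 := by rw [abs_mul]; exact mul_le_one₀ hq (abs_nonneg _) hb
  have h3 : |r * c| ≤ 1 := by rw [abs_mul]; exact mul_le_one₀ hr (abs_nonneg _) hc
  calc |p * a + q * b + r * c| ≤ |p * a + q * b| + |r * c| := abs_add_le _ _
    _ ≤ |p * a| + |q * b| + |r * c| := by linarith [abs_add_le (p * a) (q * b)]
    _ ≤ 3 := by linarith

/-- linear-in-ω part of the Rodrigues formula -/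
def sphA (x y ω : Fin 3 → ℝ) : ℝ :=
  (x 2 * y 1 - x 1 * y 2) * ω 0 + (x 0 * y 2 - x 2 * y 0) * ω 1 + (x 1 * y 0 - x 0 * y 1) * ω 2

/-- quadratic-in-ω part -/
def sphC (x y ω : Fin 3 → ℝ) : ℝ :=
  (x 0 * ω 0 + x 1 * ω 1 + x 2 * ω 2) * (y 0 * ω 0 + y 1 * ω 1 + y 2 * ω 2)

noncomputable def sphF (x y : Fin 3 → ℝ) (d α u : ℝ) (ω : Fin 3 → ℝ) : ℝ :=
  Real.sin (u * α) * sphA x y ω + Real.cos (u * α) * (d - sphC x y ω) + sphC x y ω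

noncomputable def sphFu (x y : Fin 3 → ℝ) (d α u : ℝ) (ω : Fin 3 → ℝ) : ℝ :=
  α * Real.cos (u * α) * sphA x y ω - α * Real.sin (u * α) * (d - sphC x y ω)

lemma sphA_cont (x y : Fin 3 → ℝ) : Continuous (sphA x y) := by
  unfold sphA
  fun_prop

lemma sphC_cont (x y : Fin 3 → ℝ) : Continuous (sphC x y) := by
  unfold sphC
  fun_prop

lemma sphF_cont (x y : Fin 3 → ℝ) (d α u : ℝ) : Continuous (sphF x y d α u) := by
  unfold sphF
  have := sphA_cont x y
  have := sphC_cont x y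
  fun_prop

lemma sphFu_cont (x y : Fin 3 → ℝ) (d α u : ℝ) : Continuous (sphFu x y d α u) := by
  unfold sphFu
  have := sphA_cont x y
  have := sphC_cont x y
  fun_prop

lemma sphF_zero (x y : Fin 3 → ℝ) (d α : ℝ) (ω : Fin 3 → ℝ) : sphF x y d α 0 ω = d := by
  simp [sphF]

lemma sphFu_zero (x y : Fin 3 → ℝ) (d α : ℝ) (ω : Fin 3 → ℝ) :
    sphFu x y d α 0 ω = α * sphA x y ω := by
  simp [sphFu]

lemma sphF_hasDeriv (x y : Fin 3 → ℝ) (d α : ℝ) (ω : Fin 3 → ℝ) (u : ℝ) :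
    HasDerivAt (fun u => sphF x y d α u ω) (sphFu x y d α u ω) u := by
  have hs : HasDerivAt (fun u : ℝ => Real.sin (u * α)) (Real.cos (u * α) * α) u :=
    (hasDerivAt_mul_const α).sin
  have hc : HasDerivAt (fun u : ℝ => Real.cos (u * α)) (-Real.sin (u * α) * α) u :=
    (hasDerivAt_mul_const α).cos
  have h := ((hs.mul_const (sphA x y ω)).add (hc.mul_const (d - sphC x y ω))).add_const
    (sphC x y ω)
  refine h.congr_deriv ?_
  unfold sphFu
  ring

lemma sphFu_hasDeriv_zero (x y : Fin 3 → ℝ) (d α : ℝ) (ω : Fin 3 → ℝ) :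
    HasDerivAt (fun u => sphFu x y d α u ω) (-(α ^ 2) * (d - sphC x y ω)) 0 := by
  have hs : HasDerivAt (fun u : ℝ => Real.sin (u * α)) (Real.cos (0 * α) * α) 0 :=
    (hasDerivAt_mul_const (x := (0:ℝ)) α).sin
  have hc : HasDerivAt (fun u : ℝ => Real.cos (u * α)) (-Real.sin (0 * α) * α) 0 :=
    (hasDerivAt_mul_const (x := (0:ℝ)) α).cos
  have h := (((hc.const_mul α).mul_const (sphA x y ω)).sub
    ((hs.const_mul α).mul_const (d - sphC x y ω)))
  refine h.congr_deriv ?_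
  simp only [zero_mul, Real.sin_zero, Real.cos_zero]
  ring

section bounds
variable {x y ω : Fin 3 → ℝ} {d α u : ℝ}
  (hx : ∀ i, |x i| ≤ 1) (hy : ∀ i, |y i| ≤ 1) (hω : ∀ i, |ω i| ≤ 1)

include hx hy hω in
lemma sphA_bound : |sphA x y ω| ≤ 6 := by
  unfold sphA
  have h1 := sphAux_term_bound (hx 2) (hy 1) (hx 1) (hy 2) (hω 0)
  have h2 := sphAux_term_bound (hx 0) (hy 2) (hx 2) (hy 0) (hω 1)
  have h3 := sphAux_term_bound (hx 1) (hy 0) (hx 0) (hy 1) (hω 2)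
  calc |_ + _ + _| ≤ |(x 2 * y 1 - x 1 * y 2) * ω 0 + (x 0 * y 2 - x 2 * y 0) * ω 1|
        + |(x 1 * y 0 - x 0 * y 1) * ω 2| := abs_add_le _ _
    _ ≤ |(x 2 * y 1 - x 1 * y 2) * ω 0| + |(x 0 * y 2 - x 2 * y 0) * ω 1|
        + |(x 1 * y 0 - x 0 * y 1) * ω 2| := by
          linarith [abs_add_le ((x 2 * y 1 - x 1 * y 2) * ω 0) ((x 0 * y 2 - x 2 * y 0) * ω 1)]
    _ ≤ 6 := by linarith

include hx hy hω in
lemma sphC_bound : |sphC x y ω| ≤ 9 := by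
  unfold sphC
  have h1 := sphAux_lin_bound (hx 0) (hx 1) (hx 2) (hω 0) (hω 1) (hω 2)
  have h2 := sphAux_lin_bound (hy 0) (hy 1) (hy 2) (hω 0) (hω 1) (hω 2)
  rw [abs_mul]
  calc |x 0 * ω 0 + x 1 * ω 1 + x 2 * ω 2| * |y 0 * ω 0 + y 1 * ω 1 + y 2 * ω 2|
      ≤ 3 * 3 := mul_le_mul h1 h2 (abs_nonneg _) (by norm_num)
    _ = 9 := by norm_num

include hx hy hω in
lemma sphF_dist (hd : |d| ≤ 1) (hα : 0 < α) : |sphF x y d α u ω - d| ≤ 16 * α * |u| := by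
  have hA := sphA_bound hx hy hω
  have hC := sphC_bound hx hy hω
  have hdC : |d - sphC x y ω| ≤ 10 := (abs_sub _ _).trans (by linarith)
  have hsin : |Real.sin (u * α)| ≤ α * |u| := by
    calc |Real.sin (u * α)| ≤ |u * α| := Real.abs_sin_le_abs
      _ = α * |u| := by rw [abs_mul, abs_of_pos hα]; ring
  have hcos : |Real.cos (u * α) - 1| ≤ α * |u| := by
    calc |Real.cos (u * α) - 1| ≤ |u * α| := sphAux_cos_lip (u * α)
      _ = α * |u| := by rw [abs_mul, abs_of_pos hα]; ring
  have he : sphF x y d α u ω - d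
      = Real.sin (u * α) * sphA x y ω + (Real.cos (u * α) - 1) * (d - sphC x y ω) := by
    unfold sphF; ring
  rw [he]
  calc |Real.sin (u * α) * sphA x y ω + (Real.cos (u * α) - 1) * (d - sphC x y ω)|
      ≤ |Real.sin (u * α) * sphA x y ω| + |(Real.cos (u * α) - 1) * (d - sphC x y ω)| :=
        abs_add_le _ _
    _ = |Real.sin (u * α)| * |sphA x y ω| + |Real.cos (u * α) - 1| * |d - sphC x y ω| := by
        rw [abs_mul, abs_mul]
    _ ≤ (α * |u|) * 6 + (α * |u|) * 10 := by
        gcongr <;> positivity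
    _ = 16 * α * |u| := by ring

include hx hy hω in
lemma sphFu_bound (hd : |d| ≤ 1) (hα : 0 < α) : |sphFu x y d α u ω| ≤ 16 * α := by
  have hA := sphA_bound hx hy hω
  have hC := sphC_bound hx hy hω
  have hdC : |d - sphC x y ω| ≤ 10 := (abs_sub _ _).trans (by linarith)
  unfold sphFu
  have h1 : |α * Real.cos (u * α) * sphA x y ω| ≤ α * 6 := by
    rw [abs_mul, abs_mul, abs_of_pos hα]
    calc α * |Real.cos (u * α)| * |sphA x y ω| ≤ α * 1 * 6 := by
          gcongr
          · exact Real.abs_cos_le_one _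
        _ = α * 6 := by ring
  have h2 : |α * Real.sin (u * α) * (d - sphC x y ω)| ≤ α * 10 := by
    rw [abs_mul, abs_mul, abs_of_pos hα]
    calc α * |Real.sin (u * α)| * |d - sphC x y ω| ≤ α * 1 * 10 := by
          gcongr
          · exact Real.abs_sin_le_one _
        _ = α * 10 := by ring
  calc |α * Real.cos (u * α) * sphA x y ω - α * Real.sin (u * α) * (d - sphC x y ω)|
      ≤ |α * Real.cos (u * α) * sphA x y ω| + |α * Real.sin (u * α) * (d - sphC x y ω)| :=
        abs_sub _ _
    _ ≤ 16 * α := by linarith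

include hx hy hω in
lemma sphFu_lip (hd : |d| ≤ 1) (hα : 0 < α) :
    |sphFu x y d α u ω - sphFu x y d α 0 ω| ≤ 16 * α ^ 2 * |u| := by
  have hA := sphA_bound hx hy hω
  have hC := sphC_bound hx hy hω
  have hdC : |d - sphC x y ω| ≤ 10 := (abs_sub _ _).trans (by linarith)
  have hsin : |Real.sin (u * α)| ≤ α * |u| := by
    calc |Real.sin (u * α)| ≤ |u * α| := Real.abs_sin_le_abs
      _ = α * |u| := by rw [abs_mul, abs_of_pos hα]; ring
  have hcos : |Real.cos (u * α) - 1| ≤ α * |u| := by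
    calc |Real.cos (u * α) - 1| ≤ |u * α| := sphAux_cos_lip (u * α)
      _ = α * |u| := by rw [abs_mul, abs_of_pos hα]; ring
  have he : sphFu x y d α u ω - sphFu x y d α 0 ω
      = α * ((Real.cos (u * α) - 1) * sphA x y ω) - α * (Real.sin (u * α) * (d - sphC x y ω)) := by
    unfold sphFu; simp; ring
  rw [he]
  have h1 : |α * ((Real.cos (u * α) - 1) * sphA x y ω)| ≤ α * (α * |u| * 6) := by
    rw [abs_mul, abs_mul, abs_of_pos hα]
    gcongr
  have h2 : |α * (Real.sin (u * α) * (d - sphC x y ω))| ≤ α * (α * |u| * 10) := by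
    rw [abs_mul, abs_mul, abs_of_pos hα]
    gcongr
  calc |_ - _| ≤ |α * ((Real.cos (u * α) - 1) * sphA x y ω)|
        + |α * (Real.sin (u * α) * (d - sphC x y ω))| := abs_sub _ _
    _ ≤ 16 * α ^ 2 * |u| := by nlinarith [abs_nonneg u, hα.le]

end bounds
end SphereAux
section MeasAux
open MeasureTheory Matrix Set

lemma aux_change (P : Measure (Fin 3 → ℝ))
    (hinv : ∀ O : Matrix.orthogonalGroup (Fin 3) ℝ,
      Measure.map ((O : Matrix (Fin 3) (Fin 3) ℝ).mulVec) P = P)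
    (O : Matrix (Fin 3) (Fin 3) ℝ) (hO : O ∈ Matrix.orthogonalGroup (Fin 3) ℝ)
    (g : (Fin 3 → ℝ) → ℝ) (hg : Measurable g) :
    ∫ v, g v ∂P = ∫ v, g (O.mulVec v) ∂P := by
  conv_lhs => rw [← hinv ⟨O, hO⟩]
  refine integral_map ?_ hg.aestronglyMeasurable
  have : Continuous (O.mulVec) := by
    have := (Matrix.mulVecLin O).continuous_of_finiteDimensional
    exact this
  exact this.measurable.aemeasurable

lemma aux_intmono (P : Measure (Fin 3 → ℝ)) [IsProbabilityMeasure P]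
    (f : (Fin 3 → ℝ) → ℝ) (hf : Measurable f) (C : ℝ)
    (hb : ∀ᵐ v ∂P, |f v| ≤ C) : Integrable f P :=
  Integrable.mono' (integrable_const C) hf.aestronglyMeasurable (by simpa using hb)

lemma aux_int2 (P : Measure (Fin 3 → ℝ)) [IsProbabilityMeasure P]
    (hsphere : ∀ᵐ v ∂P, v 0 ^ 2 + v 1 ^ 2 + v 2 ^ 2 = 1) (i j : Fin 3) :
    Integrable (fun v => v i * v j) P := by
  refine aux_intmono P _ ((measurable_pi_apply i).mul (measurable_pi_apply j)) 1 ?_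
  filter_upwards [hsphere.mono fun v hv => sphAux_abs1 v hv] with v hv
  rw [abs_mul]
  exact mul_le_one₀ (hv i) (abs_nonneg _) (hv j)

lemma aux_int1 (P : Measure (Fin 3 → ℝ)) [IsProbabilityMeasure P]
    (hsphere : ∀ᵐ v ∂P, v 0 ^ 2 + v 1 ^ 2 + v 2 ^ 2 = 1) (i : Fin 3) :
    Integrable (fun v => v i) P :=
  aux_intmono P _ (measurable_pi_apply i) 1 <|
    (hsphere.mono fun v hv => sphAux_abs1 v hv).mono fun v hv => hv i

lemma aux_diag_mem (d : Fin 3 → ℝ) (hd : ∀ k, d k = 1 ∨ d k = -1) :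
    Matrix.diagonal d ∈ Matrix.orthogonalGroup (Fin 3) ℝ := by
  rw [Matrix.mem_orthogonalGroup_iff]
  have h1 : star (Matrix.diagonal d) = Matrix.diagonal d := by
    simp [Matrix.star_eq_conjTranspose, Matrix.conjTranspose, Matrix.diagonal_transpose]
  rw [Matrix.diagonal_transpose, Matrix.diagonal_mul_diagonal]
  have h2 : (fun k => d k * d k) = fun _ => (1:ℝ) :=
    funext fun k => by rcases hd k with h | h <;> rw [h] <;> norm_num
  rw [h2]
  exact Matrix.diagonal_one

lemma aux_mom1 (P : Measure (Fin 3 → ℝ))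
    (hinv : ∀ O : Matrix.orthogonalGroup (Fin 3) ℝ,
      Measure.map ((O : Matrix (Fin 3) (Fin 3) ℝ).mulVec) P = P)
    (i : Fin 3) : ∫ v, v i ∂P = 0 := by
  have h := aux_change P hinv (Matrix.diagonal (fun k => if k = i then (-1:ℝ) else 1))
    (aux_diag_mem (fun k => if k = i then (-1:ℝ) else 1)
      (fun k => by by_cases h : k = i <;> simp [h]))
    (fun v => v i) (measurable_pi_apply i)
  simp [Matrix.mulVec_diagonal] at h
  rw [integral_neg] at h
  linarith

lemma aux_mom2 (P : Measure (Fin 3 → ℝ)) [IsProbabilityMeasure P]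
    (hsphere : ∀ᵐ v ∂P, v 0 ^ 2 + v 1 ^ 2 + v 2 ^ 2 = 1)
    (hinv : ∀ O : Matrix.orthogonalGroup (Fin 3) ℝ,
      Measure.map ((O : Matrix (Fin 3) (Fin 3) ℝ).mulVec) P = P)
    (i j : Fin 3) : ∫ v, v i * v j ∂P = if i = j then 1/3 else 0 := by
  have offd : ∀ (i j : Fin 3), i ≠ j → ∫ v, v i * v j ∂P = 0 := by
    intro i j hij
    have h := aux_change P hinv (Matrix.diagonal (fun k => if k = i then (-1:ℝ) else 1))
      (aux_diag_mem (fun k => if k = i then (-1:ℝ) else 1)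
        (fun k => by by_cases h : k = i <;> simp [h]))
      (fun v => v i * v j) ((measurable_pi_apply i).mul (measurable_pi_apply j))
    simp [Matrix.mulVec_diagonal, Ne.symm hij] at h
    rw [integral_neg] at h
    linarith
  have swap01 : ∫ v, v 0 * v 0 ∂P = ∫ v, v 1 * v 1 ∂P := by
    have h := aux_change P hinv !![0,1,0;1,0,0;0,0,1]
      (by rw [Matrix.mem_orthogonalGroup_iff]; ext a b;
          fin_cases a <;> fin_cases b <;> simp [Matrix.mul_apply, Fin.sum_univ_three])
      (fun v => v 0 * v 0) ((measurable_pi_apply 0).mul (measurable_pi_apply 0))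
    convert h using 2 with v
    simp [Matrix.mulVec, dotProduct, Fin.sum_univ_three]
  have swap02 : ∫ v, v 0 * v 0 ∂P = ∫ v, v 2 * v 2 ∂P := by
    have h := aux_change P hinv !![0,0,1;0,1,0;1,0,0]
      (by rw [Matrix.mem_orthogonalGroup_iff]; ext a b;
          fin_cases a <;> fin_cases b <;> simp [Matrix.mul_apply, Fin.sum_univ_three])
      (fun v => v 0 * v 0) ((measurable_pi_apply 0).mul (measurable_pi_apply 0))
    convert h using 2 with v
    simp [Matrix.mulVec, dotProduct, Fin.sum_univ_three]
  have hsum : ∑ k : Fin 3, ∫ v, v k * v k ∂P = 1 := by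
    rw [← integral_finset_sum _ (fun k _ => aux_int2 P hsphere k k)]
    rw [integral_congr_ae (g := fun _ => (1:ℝ)) (hsphere.mono fun v hv => by
      simp only [Fin.sum_univ_three]; nlinarith)]
    simp
  rw [Fin.sum_univ_three] at hsum
  have diag : ∀ i : Fin 3, ∫ v, v i * v i ∂P = 1/3 := by
    intro i
    fin_cases i
    · show ∫ v, v 0 * v 0 ∂P = 1/3; linarith
    · show ∫ v, v 1 * v 1 ∂P = 1/3; linarith
    · show ∫ v, v 2 * v 2 ∂P = 1/3; linarith
  by_cases h : i = j
  · subst h; rw [if_pos rfl]; exact diag i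
  · rw [if_neg h]; exact offd i j h

lemma aux_bilin (P : Measure (Fin 3 → ℝ)) [IsProbabilityMeasure P]
    (hsphere : ∀ᵐ v ∂P, v 0 ^ 2 + v 1 ^ 2 + v 2 ^ 2 = 1)
    (hinv : ∀ O : Matrix.orthogonalGroup (Fin 3) ℝ,
      Measure.map ((O : Matrix (Fin 3) (Fin 3) ℝ).mulVec) P = P)
    (a0 a1 a2 b0 b1 b2 : ℝ) :
    ∫ v, (a0 * v 0 + a1 * v 1 + a2 * v 2) * (b0 * v 0 + b1 * v 1 + b2 * v 2) ∂P
    = (a0 * b0 + a1 * b1 + a2 * b2) / 3 := by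
  have expand : ∀ v : Fin 3 → ℝ,
      (a0 * v 0 + a1 * v 1 + a2 * v 2) * (b0 * v 0 + b1 * v 1 + b2 * v 2)
      = ∑ p : Fin 3 × Fin 3, ![a0,a1,a2] p.1 * ![b0,b1,b2] p.2 * (v p.1 * v p.2) := by
    intro v
    rw [Fintype.sum_prod_type, Fin.sum_univ_three]
    simp only [Fin.sum_univ_three]
    simp only [Matrix.cons_val_zero, Matrix.cons_val_one, Matrix.head_cons,
      Matrix.cons_val_two, Matrix.tail_cons]
    ring
  rw [integral_congr_ae (ae_of_all _ expand),
    integral_finset_sum _ (fun p _ => ((aux_int2 P hsphere p.1 p.2).const_mul _))]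
  have key : ∀ p : Fin 3 × Fin 3, ∫ v, ![a0,a1,a2] p.1 * ![b0,b1,b2] p.2 * (v p.1 * v p.2) ∂P
      = ![a0,a1,a2] p.1 * ![b0,b1,b2] p.2 * (if p.1 = p.2 then 1/3 else 0) := by
    intro p
    rw [integral_const_mul, aux_mom2 P hsphere hinv]
  simp_rw [key]
  rw [Fintype.sum_prod_type, Fin.sum_univ_three]
  simp only [Fin.sum_univ_three]
  norm_num [show ((0:Fin 3) = 2) ↔ False from by decide, show ((1:Fin 3) = 2) ↔ False from by decide,
    show ((2:Fin 3) = 0) ↔ False from by decide, show ((2:Fin 3) = 1) ↔ False from by decide]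
  have e2a : (![a0,a1,a2] : Fin 3 → ℝ) 2 = a2 := rfl
  have e2b : (![b0,b1,b2] : Fin 3 → ℝ) 2 = b2 := rfl
  rw [e2a, e2b]
  ring

lemma aux_lin (P : Measure (Fin 3 → ℝ)) [IsProbabilityMeasure P]
    (hsphere : ∀ᵐ v ∂P, v 0 ^ 2 + v 1 ^ 2 + v 2 ^ 2 = 1)
    (hinv : ∀ O : Matrix.orthogonalGroup (Fin 3) ℝ,
      Measure.map ((O : Matrix (Fin 3) (Fin 3) ℝ).mulVec) P = P)
    (a0 a1 a2 : ℝ) :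
    ∫ v, (a0 * v 0 + a1 * v 1 + a2 * v 2) ∂P = 0 := by
  have expand : ∀ v : Fin 3 → ℝ, (a0 * v 0 + a1 * v 1 + a2 * v 2)
      = ∑ i : Fin 3, ![a0,a1,a2] i * v i := by
    intro v
    rw [Fin.sum_univ_three]
    simp only [Matrix.cons_val_zero, Matrix.cons_val_one, Matrix.head_cons,
      Matrix.cons_val_two, Matrix.tail_cons]
  rw [integral_congr_ae (ae_of_all _ expand),
    integral_finset_sum _ (fun i _ => ((aux_int1 P hsphere i).const_mul _))]
  have key : ∀ i : Fin 3, ∫ v, ![a0,a1,a2] i * v i ∂P = 0 := by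
    intro i; rw [integral_const_mul, aux_mom1 P hinv, mul_zero]
  simp [key]
end MeasAux

/-- Theorem 3 of the paper: for the sphere transport covariance
`ψ(θ,u) = E_ω[ψ_S(xᵀR_ω(uα)y)]`, with `ω` uniform on `S²` and `θ = arccos(xᵀy) ∈ (0,π)`,
one has `∂ψ/∂u(θ,0) = 0` and
`∂²ψ/∂u²(θ,0) = (α²/3)(ψ_S''(cos θ) sin²θ - 2ψ_S'(cos θ) cos θ)`. For `ψ_S(c) = c` the
transport covariance is `ψ(θ,u) = (1 + 2cos(uα)) cos θ / 3`, and the dimple indicator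
`-2cos θ` is negative on `(0, π/2)` and positive on `(π/2, π)`. -/
theorem sphere_transport_derivatives (ψS : ℝ → ℝ)
    (hcont : ContinuousOn ψS (Icc (-1 : ℝ) 1))
    (hd1 : ∀ c ∈ Ioo (-1 : ℝ) 1, DifferentiableAt ℝ ψS c)
    (hd2 : ∀ c ∈ Ioo (-1 : ℝ) 1, DifferentiableAt ℝ (deriv ψS) c)
    (P : Measure (Fin 3 → ℝ)) [IsProbabilityMeasure P]
    (hsphere : ∀ᵐ v ∂P, v 0 ^ 2 + v 1 ^ 2 + v 2 ^ 2 = 1)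
    (hinv : ∀ O : Matrix.orthogonalGroup (Fin 3) ℝ,
      Measure.map ((O : Matrix (Fin 3) (Fin 3) ℝ).mulVec) P = P)
    (x y : Fin 3 → ℝ)
    (hx : x 0 ^ 2 + x 1 ^ 2 + x 2 ^ 2 = 1)
    (hy : y 0 ^ 2 + y 1 ^ 2 + y 2 ^ 2 = 1)
    (α : ℝ) (hα : 0 < α)
    (θ : ℝ) (hθdef : θ = Real.arccos (x ⬝ᵥ y)) (hθ : θ ∈ Ioo 0 Real.pi)
    (R : (Fin 3 → ℝ) → ℝ → Matrix (Fin 3) (Fin 3) ℝ)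
    (hR : ∀ ω β, R ω β = Real.sin β • !![0, -ω 2, ω 1; ω 2, 0, -ω 0; -ω 1, ω 0, 0]
      + Real.cos β • (1 - vecMulVec ω ω) + vecMulVec ω ω)
    (ψ : ℝ → ℝ)
    (hψ : ∀ u, ψ u = ∫ ω, ψS (x ⬝ᵥ (R ω (u * α)).mulVec y) ∂P) :
    deriv ψ 0 = 0 ∧
    deriv (deriv ψ) 0 = (α ^ 2 / 3) *
      (deriv (deriv ψS) (Real.cos θ) * Real.sin θ ^ 2
        - 2 * deriv ψS (Real.cos θ) * Real.cos θ) ∧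
    ((∀ c, ψS c = c) → ∀ u, ψ u = (1 + 2 * Real.cos (u * α)) * Real.cos θ / 3) ∧
    (∀ t ∈ Ioo 0 (Real.pi / 2), -2 * Real.cos t < 0) ∧
    (∀ t ∈ Ioo (Real.pi / 2) Real.pi, 0 < -2 * Real.cos t) := by
  have hπ := Real.pi_pos
  set d : ℝ := x ⬝ᵥ y with hd_def
  have hd_expand : d = x 0 * y 0 + x 1 * y 1 + x 2 * y 2 := by
    simp [hd_def, dotProduct, Fin.sum_univ_three]
  have hdlt : d < 1 := by
    by_contra h
    push_neg at h
    have h0 : θ = 0 := hθdef.trans (Real.arccos_eq_zero.2 h)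
    rw [h0] at hθ
    exact lt_irrefl 0 hθ.1
  have hdgt : -1 < d := by
    by_contra h
    push_neg at h
    have h0 : θ = Real.pi := hθdef.trans (Real.arccos_eq_pi.2 h)
    rw [h0] at hθ
    exact lt_irrefl Real.pi hθ.2
  have hdcos : Real.cos θ = d := by rw [hθdef]; exact Real.cos_arccos hdgt.le hdlt.le
  have hdabs : |d| ≤ 1 := abs_le.2 ⟨hdgt.le, hdlt.le⟩
  have hsin2 : Real.sin θ ^ 2 = 1 - d ^ 2 := by rw [Real.sin_sq, hdcos]
  -- epsilon, the safe interval around d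
  set ε : ℝ := min (1 - d) (d + 1) / 2 with hε_def
  have hεpos : 0 < ε := by
    have h1 : 0 < min (1 - d) (d + 1) := lt_min (by linarith) (by linarith)
    rw [hε_def]; linarith
  have hJlo : -1 < d - ε := by
    have := min_le_right (1 - d) (d + 1)
    rw [hε_def]; linarith
  have hJhi : d + ε < 1 := by
    have := min_le_left (1 - d) (d + 1)
    rw [hε_def]; linarith
  have hJIoo : Icc (d - ε) (d + ε) ⊆ Ioo (-1:ℝ) 1 := fun c hc =>
    ⟨by linarith [hc.1], by linarith [hc.2]⟩
  -- coordinate bounds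
  have hax : ∀ i, |x i| ≤ 1 := sphAux_abs1 x hx
  have hay : ∀ i, |y i| ≤ 1 := sphAux_abs1 y hy
  have haω : ∀ᵐ ω ∂P, ∀ i : Fin 3, |ω i| ≤ 1 := hsphere.mono fun v hv => sphAux_abs1 v hv
  -- the Rodrigues expansion
  have hFexp : ∀ (ω : Fin 3 → ℝ) (β : ℝ), x ⬝ᵥ (R ω β).mulVec y
      = Real.sin β * sphA x y ω + Real.cos β * (d - sphC x y ω) + sphC x y ω := by
    intro ω β
    rw [hR, hd_expand]
    simp [sphA, sphC, Matrix.mulVec, dotProduct, Fin.sum_univ_three,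
      Matrix.vecMulVec_apply, Matrix.one_apply]
    ring
  -- continuous extension of ψS
  set ψT : ℝ → ℝ := fun c => ψS (max (-1) (min 1 c)) with hψT_def
  have hclip_mem : ∀ c : ℝ, max (-1) (min 1 c) ∈ Icc (-1:ℝ) 1 := fun c =>
    ⟨le_max_left _ _, max_le (by norm_num) (min_le_left _ _)⟩
  have hψT_cont : Continuous ψT := hcont.comp_continuous
    (continuous_const.max (continuous_const.min continuous_id)) hclip_mem
  have hψT_eqIcc : ∀ c ∈ Icc (-1:ℝ) 1, ψT c = ψS c := by
    intro c hc
    simp only [hψT_def]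
    rw [min_eq_right hc.2, max_eq_right hc.1]
  have hψT_deriv : ∀ c ∈ Ioo (-1:ℝ) 1, HasDerivAt ψT (deriv ψS c) c := by
    intro c hc
    refine ((hd1 c hc).hasDerivAt).congr_of_eventuallyEq ?_
    filter_upwards [Ioo_mem_nhds hc.1 hc.2] with z hz
    exact hψT_eqIcc z (Ioo_subset_Icc_self hz)
  obtain ⟨M0, hM0⟩ := isCompact_Icc.exists_bound_of_continuousOn hcont
  have hψT_bdd : ∀ c, |ψT c| ≤ M0 := fun c => hM0 _ (hclip_mem c)
  -- clipped version of deriv ψS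
  have hclipJ_mem : ∀ c : ℝ, max (d - ε) (min (d + ε) c) ∈ Icc (d - ε) (d + ε) := fun c =>
    ⟨le_max_left _ _, max_le (by linarith) (min_le_left _ _)⟩
  set φ1 : ℝ → ℝ := fun c => deriv ψS (max (d - ε) (min (d + ε) c)) with hφ1_def
  have hψS'cont : ContinuousOn (deriv ψS) (Ioo (-1:ℝ) 1) := fun c hc =>
    ((hd2 c hc).continuousAt).continuousWithinAt
  have hφ1_cont : Continuous φ1 := ContinuousOn.comp_continuous hψS'cont
    (continuous_const.max (continuous_const.min continuous_id))
    (fun c => hJIoo (hclipJ_mem c))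
  have hφ1_eqJ : ∀ c ∈ Icc (d - ε) (d + ε), φ1 c = deriv ψS c := by
    intro c hc
    simp only [hφ1_def]
    rw [min_eq_right hc.2, max_eq_right hc.1]
  obtain ⟨M1, hM1⟩ := (isCompact_Icc (a := d - ε) (b := d + ε)).exists_bound_of_continuousOn
    (hψS'cont.mono hJIoo)
  have hφ1_bdd : ∀ c, |φ1 c| ≤ M1 := by
    intro c
    have := hM1 _ (hclipJ_mem c)
    simpa [hφ1_def] using this
  have hM1pos : 0 ≤ M1 := (abs_nonneg _).trans (hφ1_bdd 0)
  have hdIoo : d ∈ Ioo (-1:ℝ) 1 := ⟨hdgt, hdlt⟩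
  have hdJmem : d ∈ Icc (d - ε) (d + ε) := ⟨by linarith, by linarith⟩
  set K2 : ℝ := deriv (deriv ψS) d with hK2_def
  have hφ1_deriv : HasDerivAt φ1 K2 d := by
    refine ((hd2 d hdIoo).hasDerivAt).congr_of_eventuallyEq ?_
    filter_upwards [Ioo_mem_nhds (show d - ε < d by linarith) (show d < d + ε by linarith)]
      with z hz
    exact hφ1_eqJ z (Ioo_subset_Icc_self hz)
  -- delta
  set δ : ℝ := ε / (16 * α) with hδ_def
  have hδpos : 0 < δ := by rw [hδ_def]; positivity
  have hFmem : ∀ u : ℝ, |u| < δ → ∀ ω : Fin 3 → ℝ, (∀ i, |ω i| ≤ 1) →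
      sphF x y d α u ω ∈ Icc (d - ε) (d + ε) := by
    intro u hu ω hω
    have h := sphF_dist hax hay hω hdabs hα (u := u)
    have h2 : 16 * α * |u| < ε := by
      have h3 : 16 * α * |u| < 16 * α * δ := by
        have : (0:ℝ) < 16 * α := by positivity
        exact (mul_lt_mul_iff_right₀ this).2 hu
      have h4 : 16 * α * δ = ε := by rw [hδ_def]; field_simp
      linarith
    have h3 : |sphF x y d α u ω - d| < ε := lt_of_le_of_lt h h2
    have h4 := abs_lt.1 h3
    exact ⟨by linarith [h4.1], by linarith [h4.2]⟩
  -- ψ agrees with the regularized integral near 0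
  have hψeq : ∀ u : ℝ, |u| < δ → ψ u = ∫ ω, ψT (sphF x y d α u ω) ∂P := by
    intro u hu
    rw [hψ u]
    have h1 : ∀ ω, ψS (x ⬝ᵥ (R ω (u * α)).mulVec y) = ψS (sphF x y d α u ω) := by
      intro ω
      rw [hFexp ω (u * α)]
      rfl
    rw [integral_congr_ae (ae_of_all _ h1)]
    refine integral_congr_ae ?_
    filter_upwards [haω] with ω hω
    exact (hψT_eqIcc _ (Ioo_subset_Icc_self (hJIoo (hFmem u hu ω hω)))).symm
  have hψev : ψ =ᶠ[nhds 0] fun u => ∫ ω, ψT (sphF x y d α u ω) ∂P := by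
    filter_upwards [Metric.ball_mem_nhds (0:ℝ) hδpos] with u hu
    exact hψeq u (by simpa [Real.dist_eq] using hu)
  -- integrability helpers
  have hmeasψT : ∀ u : ℝ, AEStronglyMeasurable (fun ω => ψT (sphF x y d α u ω)) P :=
    fun u => (hψT_cont.comp (sphF_cont x y d α u)).aestronglyMeasurable
  have hintψT : ∀ u : ℝ, Integrable (fun ω => ψT (sphF x y d α u ω)) P := fun u =>
    aux_intmono P _ (hψT_cont.comp (sphF_cont x y d α u)).measurable M0
      (ae_of_all _ fun ω => hψT_bdd _)
  have hmeasF' : ∀ u : ℝ,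
      AEStronglyMeasurable (fun ω => φ1 (sphF x y d α u ω) * sphFu x y d α u ω) P := fun u =>
    ((hφ1_cont.comp (sphF_cont x y d α u)).mul (sphFu_cont x y d α u)).aestronglyMeasurable
  have hintF' : ∀ u : ℝ,
      Integrable (fun ω => φ1 (sphF x y d α u ω) * sphFu x y d α u ω) P := by
    intro u
    refine aux_intmono P _
      (((hφ1_cont.comp (sphF_cont x y d α u)).mul (sphFu_cont x y d α u)).measurable)
      (M1 * (16 * α)) ?_
    filter_upwards [haω] with ω hω
    rw [abs_mul]
    exact mul_le_mul (hφ1_bdd _) (sphFu_bound hax hay hω hdabs hα) (abs_nonneg _) hM1pos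
  -- STEP 1 : derivative of the regularized integral on the ball
  have step1 : ∀ u₀ : ℝ, |u₀| < δ →
      HasDerivAt (fun u => ∫ ω, ψT (sphF x y d α u ω) ∂P)
        (∫ ω, φ1 (sphF x y d α u₀ ω) * sphFu x y d α u₀ ω ∂P) u₀ := by
    intro u₀ hu₀
    have hε' : 0 < δ - |u₀| := by linarith
    have hball : ∀ u : ℝ, u ∈ Metric.ball u₀ (δ - |u₀|) → |u| < δ := by
      intro u hu
      rw [Metric.mem_ball, Real.dist_eq] at hu
      calc |u| = |(u - u₀) + u₀| := by ring_nf
        _ ≤ |u - u₀| + |u₀| := abs_add_le _ _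
        _ < δ := by linarith
    refine (hasDerivAt_integral_of_dominated_loc_of_deriv_le (μ := P) (Metric.ball_mem_nhds u₀ hε')
      (F := fun u ω => ψT (sphF x y d α u ω))
      (F' := fun u ω => φ1 (sphF x y d α u ω) * sphFu x y d α u ω)
      (bound := fun _ => M1 * (16 * α))
      (Filter.Eventually.of_forall fun u => hmeasψT u)
      (hintψT u₀) (hmeasF' u₀) ?_ (integrable_const _) ?_).2
    · filter_upwards [haω] with ω hω
      intro u hu
      rw [Real.norm_eq_abs, abs_mul]
      exact mul_le_mul (hφ1_bdd _) (sphFu_bound hax hay hω hdabs hα) (abs_nonneg _) hM1pos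
    · filter_upwards [haω] with ω hω
      intro u hu
      have hmem := hFmem u (hball u hu) ω hω
      have h1 : HasDerivAt ψT (deriv ψS (sphF x y d α u ω)) (sphF x y d α u ω) :=
        hψT_deriv _ (hJIoo hmem)
      have h2 := h1.comp u (sphF_hasDeriv x y d α ω u)
      rw [hφ1_eqJ _ hmem]
      exact h2
  -- value of Φ at 0
  have hg0 : ∀ ω : Fin 3 → ℝ, φ1 (sphF x y d α 0 ω) * sphFu x y d α 0 ω
      = φ1 d * (α * sphA x y ω) := by
    intro ω
    rw [sphF_zero, sphFu_zero]
  have hΦ0' : ∫ ω, φ1 (sphF x y d α 0 ω) * sphFu x y d α 0 ω ∂P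
      = ∫ ω, φ1 d * (α * sphA x y ω) ∂P := integral_congr_ae (ae_of_all _ hg0)
  have hIA0 : ∫ ω, sphA x y ω ∂P = 0 := by
    have := aux_lin P hsphere hinv (x 2 * y 1 - x 1 * y 2) (x 0 * y 2 - x 2 * y 0)
      (x 1 * y 0 - x 0 * y 1)
    simpa [sphA] using this
  have hΦ0 : ∫ ω, φ1 (sphF x y d α 0 ω) * sphFu x y d α 0 ω ∂P = 0 := by
    rw [hΦ0']
    have h1 : ∀ ω : Fin 3 → ℝ, φ1 d * (α * sphA x y ω) = (φ1 d * α) * sphA x y ω := by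
      intro ω; ring
    rw [integral_congr_ae (ae_of_all _ h1), integral_const_mul, hIA0, mul_zero]
  -- part 1
  have hψR_deriv0 := step1 0 (by simpa using hδpos)
  have hpart1 : deriv ψ 0 = 0 := by
    rw [Filter.EventuallyEq.deriv_eq hψev, hψR_deriv0.deriv, hΦ0]
  -- STEP 2 : second derivative
  have hintg0 : Integrable (fun ω => φ1 d * (α * sphA x y ω)) P := by
    refine aux_intmono P _ (by have := sphA_cont x y; fun_prop) (M1 * (α * 6)) ?_
    filter_upwards [haω] with ω hω
    rw [abs_mul]
    refine mul_le_mul (hφ1_bdd _) ?_ (abs_nonneg _) hM1pos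
    rw [abs_mul, abs_of_pos hα]
    exact mul_le_mul_of_nonneg_left (sphA_bound hax hay hω) hα.le
  have hintA2 : Integrable (fun ω => sphA x y ω * sphA x y ω) P := by
    refine aux_intmono P _ (by have := sphA_cont x y; fun_prop) 36 ?_
    filter_upwards [haω] with ω hω
    rw [abs_mul]
    calc |sphA x y ω| * |sphA x y ω| ≤ 6 * 6 :=
        mul_le_mul (sphA_bound hax hay hω) (sphA_bound hax hay hω) (abs_nonneg _) (by norm_num)
      _ = 36 := by norm_num
  have hintC : Integrable (fun ω => sphC x y ω) P := by
    refine aux_intmono P _ (by have := sphC_cont x y; fun_prop) 9 ?_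
    filter_upwards [haω] with ω hω
    exact sphC_bound hax hay hω
  have hintdC : Integrable (fun ω => d - sphC x y ω) P := (integrable_const d).sub hintC
  have hIA2 : ∫ ω, sphA x y ω * sphA x y ω ∂P = (1 - d ^ 2) / 3 := by
    have h := aux_bilin P hsphere hinv (x 2 * y 1 - x 1 * y 2) (x 0 * y 2 - x 2 * y 0)
      (x 1 * y 0 - x 0 * y 1) (x 2 * y 1 - x 1 * y 2) (x 0 * y 2 - x 2 * y 0)
      (x 1 * y 0 - x 0 * y 1)
    have h2 : (x 2 * y 1 - x 1 * y 2) * (x 2 * y 1 - x 1 * y 2)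
        + (x 0 * y 2 - x 2 * y 0) * (x 0 * y 2 - x 2 * y 0)
        + (x 1 * y 0 - x 0 * y 1) * (x 1 * y 0 - x 0 * y 1) = 1 - d ^ 2 := by
      rw [hd_expand]
      linear_combination (y 0 ^ 2 + y 1 ^ 2 + y 2 ^ 2) * hx + hy
    rw [h2] at h
    simpa [sphA] using h
  have hIC : ∫ ω, sphC x y ω ∂P = d / 3 := by
    have h := aux_bilin P hsphere hinv (x 0) (x 1) (x 2) (y 0) (y 1) (y 2)
    rw [← hd_expand] at h
    simpa [sphC] using h
  have hIdC : ∫ ω, (d - sphC x y ω) ∂P = d - d / 3 := by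
    rw [integral_sub (integrable_const d) hintC, integral_const, hIC]
    simp
  set L : ℝ := ∫ ω, (K2 * (α * sphA x y ω) * (α * sphA x y ω)
      + φ1 d * (-(α ^ 2) * (d - sphC x y ω))) ∂P with hL_def
  have hLval : L = K2 * α ^ 2 * ((1 - d ^ 2) / 3) + φ1 d * (-(α ^ 2)) * (d - d / 3) := by
    rw [hL_def]
    have h1 : ∀ ω : Fin 3 → ℝ, K2 * (α * sphA x y ω) * (α * sphA x y ω)
        + φ1 d * (-(α ^ 2) * (d - sphC x y ω))
        = (K2 * α ^ 2) * (sphA x y ω * sphA x y ω)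
          + (φ1 d * (-(α ^ 2))) * (d - sphC x y ω) := by
      intro ω; ring
    rw [integral_congr_ae (ae_of_all _ h1),
      integral_add (hintA2.const_mul _) (hintdC.const_mul _),
      integral_const_mul, integral_const_mul, hIA2, hIdC]
  have step2 : HasDerivAt
      (fun u => ∫ ω, φ1 (sphF x y d α u ω) * sphFu x y d α u ω ∂P) L 0 := by
    rw [hasDerivAt_iff_tendsto_slope]
    have hq_eq : ∀ᶠ h in nhdsWithin (0:ℝ) {(0:ℝ)}ᶜ,
        (∫ ω, (φ1 (sphF x y d α h ω) * sphFu x y d α h ω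
          - φ1 d * (α * sphA x y ω)) / h ∂P)
        = slope (fun u => ∫ ω, φ1 (sphF x y d α u ω) * sphFu x y d α u ω ∂P) 0 h := by
      filter_upwards [eventually_mem_nhdsWithin] with h hh
      rw [slope_def_field, sub_zero]
      rw [hΦ0']
      rw [← integral_sub (hintF' h) hintg0, ← integral_div]
    -- the bigO bound for φ1 near d
    obtain ⟨cB, hcB⟩ := hφ1_deriv.isBigO_sub.bound
    obtain ⟨δ₂, hδ₂pos, hδ₂⟩ := Metric.eventually_nhds_iff.1 hcB
    set cB' : ℝ := max cB 0 with hcB'_def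
    have hcB'nonneg : 0 ≤ cB' := le_max_right _ _
    have hδ₂' : ∀ c : ℝ, |c - d| < δ₂ → |φ1 c - φ1 d| ≤ cB' * |c - d| := by
      intro c hc
      have h1 := hδ₂ (show dist c d < δ₂ by rwa [Real.dist_eq])
      rw [Real.norm_eq_abs, Real.norm_eq_abs] at h1
      calc |φ1 c - φ1 d| ≤ cB * |c - d| := h1
        _ ≤ cB' * |c - d| := mul_le_mul_of_nonneg_right (le_max_left _ _) (abs_nonneg _)
    set δ' : ℝ := min δ (δ₂ / (17 * α)) with hδ'_def
    have hδ'pos : 0 < δ' := lt_min hδpos (by positivity)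
    refine Filter.Tendsto.congr' hq_eq ?_
    refine tendsto_integral_filter_of_dominated_convergence
      (bound := fun _ => M1 * (16 * α ^ 2) + cB' * (16 * α) * (6 * α)) ?_ ?_
      (integrable_const _) ?_
    · refine Filter.Eventually.of_forall fun h => Continuous.aestronglyMeasurable ?_
      exact (((hφ1_cont.comp (sphF_cont x y d α h)).mul (sphFu_cont x y d α h)).sub
        (continuous_const.mul (continuous_const.mul (sphA_cont x y)))).div_const h
    · have hev : ∀ᶠ h in nhdsWithin (0:ℝ) {(0:ℝ)}ᶜ, |h| < δ' ∧ h ≠ 0 := by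
        have h1 : ∀ᶠ h in nhdsWithin (0:ℝ) {(0:ℝ)}ᶜ, |h| < δ' := by
          refine Filter.Eventually.filter_mono nhdsWithin_le_nhds ?_
          filter_upwards [Metric.ball_mem_nhds (0:ℝ) hδ'pos] with h hh
          simpa [Real.dist_eq] using hh
        filter_upwards [h1, eventually_mem_nhdsWithin] with h h2 h3
        exact ⟨h2, h3⟩
      filter_upwards [hev] with h hh
      obtain ⟨hhδ', hh0⟩ := hh
      have hhδ : |h| < δ := lt_of_lt_of_le hhδ' (min_le_left _ _)
      filter_upwards [haω] with ω hω
      have hFd : |sphF x y d α h ω - d| ≤ 16 * α * |h| :=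
        sphF_dist hax hay hω hdabs hα
      have hFdlt : |sphF x y d α h ω - d| < δ₂ := by
        have h2 : |h| < δ₂ / (17 * α) := lt_of_lt_of_le hhδ' (min_le_right _ _)
        have h3 : 16 * α * |h| < 16 * α * (δ₂ / (17 * α)) := by
          have : (0:ℝ) < 16 * α := by positivity
          exact (mul_lt_mul_iff_right₀ this).2 h2
        have h4 : 16 * α * (δ₂ / (17 * α)) = 16 / 17 * δ₂ := by field_simp
        calc |sphF x y d α h ω - d| ≤ 16 * α * |h| := hFd
          _ < 16 / 17 * δ₂ := by linarith
          _ < δ₂ := by linarith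
      have hφΔ : |φ1 (sphF x y d α h ω) - φ1 d| ≤ cB' * (16 * α * |h|) := by
        calc |φ1 (sphF x y d α h ω) - φ1 d| ≤ cB' * |sphF x y d α h ω - d| :=
            hδ₂' _ hFdlt
          _ ≤ cB' * (16 * α * |h|) := mul_le_mul_of_nonneg_left hFd hcB'nonneg
      have hFulip : |sphFu x y d α h ω - sphFu x y d α 0 ω| ≤ 16 * α ^ 2 * |h| :=
        sphFu_lip hax hay hω hdabs hα
      have hAb : |α * sphA x y ω| ≤ 6 * α := by
        rw [abs_mul, abs_of_pos hα]
        calc α * |sphA x y ω| ≤ α * 6 :=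
            mul_le_mul_of_nonneg_left (sphA_bound hax hay hω) hα.le
          _ = 6 * α := by ring
      have hnum : |φ1 (sphF x y d α h ω) * sphFu x y d α h ω - φ1 d * (α * sphA x y ω)|
          ≤ (M1 * (16 * α ^ 2) + cB' * (16 * α) * (6 * α)) * |h| := by
        have hsplit : φ1 (sphF x y d α h ω) * sphFu x y d α h ω - φ1 d * (α * sphA x y ω)
            = φ1 (sphF x y d α h ω) * (sphFu x y d α h ω - sphFu x y d α 0 ω)
              + (φ1 (sphF x y d α h ω) - φ1 d) * (α * sphA x y ω) := by
          rw [sphFu_zero]; ring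
        rw [hsplit]
        have hb1 : |φ1 (sphF x y d α h ω) * (sphFu x y d α h ω - sphFu x y d α 0 ω)|
            ≤ M1 * (16 * α ^ 2 * |h|) := by
          rw [abs_mul]
          exact mul_le_mul (hφ1_bdd _) hFulip (abs_nonneg _) hM1pos
        have hb2 : |(φ1 (sphF x y d α h ω) - φ1 d) * (α * sphA x y ω)|
            ≤ cB' * (16 * α * |h|) * (6 * α) := by
          rw [abs_mul]
          exact mul_le_mul hφΔ hAb (abs_nonneg _) (by positivity)
        calc |_ + _| ≤ |φ1 (sphF x y d α h ω) * (sphFu x y d α h ω - sphFu x y d α 0 ω)|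
              + |(φ1 (sphF x y d α h ω) - φ1 d) * (α * sphA x y ω)| := abs_add_le _ _
          _ ≤ M1 * (16 * α ^ 2 * |h|) + cB' * (16 * α * |h|) * (6 * α) := by linarith
          _ = (M1 * (16 * α ^ 2) + cB' * (16 * α) * (6 * α)) * |h| := by ring
      rw [Real.norm_eq_abs, abs_div]
      rw [div_le_iff₀ (abs_pos.2 hh0)]
      exact hnum
    · filter_upwards [haω] with ω hω
      have hφF : HasDerivAt (fun h : ℝ => φ1 (sphF x y d α h ω))
          (K2 * sphFu x y d α 0 ω) 0 := by
        have h1 : HasDerivAt φ1 K2 (sphF x y d α 0 ω) := by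
          rw [sphF_zero]; exact hφ1_deriv
        exact h1.comp 0 (sphF_hasDeriv x y d α ω 0)
      have hprod := hφF.mul (sphFu_hasDeriv_zero x y d α ω)
      have hprod' : HasDerivAt (fun h : ℝ => φ1 (sphF x y d α h ω) * sphFu x y d α h ω)
          (K2 * (α * sphA x y ω) * (α * sphA x y ω)
            + φ1 d * (-(α ^ 2) * (d - sphC x y ω))) 0 := by
        refine hprod.congr_deriv ?_
        rw [sphF_zero, sphFu_zero]
        try ring
      rw [hasDerivAt_iff_tendsto_slope] at hprod'
      refine hprod'.congr' ?_
      filter_upwards [eventually_mem_nhdsWithin] with h hh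
      simp only [slope_def_field, sub_zero]
      rw [hg0]
  -- part 2
  have hΦev : deriv ψ =ᶠ[nhds 0]
      fun u => ∫ ω, φ1 (sphF x y d α u ω) * sphFu x y d α u ω ∂P := by
    refine (hψev.deriv).trans ?_
    filter_upwards [Metric.ball_mem_nhds (0:ℝ) hδpos] with u hu
    exact (step1 u (by simpa [Real.dist_eq] using hu)).deriv
  have hpart2 : deriv (deriv ψ) 0 = (α ^ 2 / 3) *
      (deriv (deriv ψS) (Real.cos θ) * Real.sin θ ^ 2
        - 2 * deriv ψS (Real.cos θ) * Real.cos θ) := by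
    rw [Filter.EventuallyEq.deriv_eq hΦev, step2.deriv, hLval, hdcos, hsin2,
      ← hφ1_eqJ d hdJmem, ← hK2_def]
    ring
  refine ⟨hpart1, hpart2, ?_, ?_, ?_⟩
  · -- linear covariance
    intro hlin u
    rw [hψ u]
    have h1 : ∀ ω : Fin 3 → ℝ, ψS (x ⬝ᵥ (R ω (u * α)).mulVec y)
        = Real.sin (u * α) * sphA x y ω + Real.cos (u * α) * (d - sphC x y ω)
          + sphC x y ω := by
      intro ω
      rw [hlin, hFexp]
    rw [integral_congr_ae (ae_of_all _ h1)]
    have hintA : Integrable (fun ω => sphA x y ω) P := by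
      refine aux_intmono P _ (by have := sphA_cont x y; fun_prop) 6 ?_
      filter_upwards [haω] with ω hω
      exact sphA_bound hax hay hω
    have i1 : Integrable (fun ω => Real.sin (u * α) * sphA x y ω) P :=
      hintA.const_mul _
    have i2 : Integrable (fun ω => Real.cos (u * α) * (d - sphC x y ω)) P :=
      hintdC.const_mul _
    have i12 : Integrable (fun ω => Real.sin (u * α) * sphA x y ω
        + Real.cos (u * α) * (d - sphC x y ω)) P := i1.add i2
    rw [integral_add i12 hintC, integral_add i1 i2, integral_const_mul, integral_const_mul,
      hIA0, hIdC, hIC, hdcos]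
    ring
  · intro t ht
    have h := Real.cos_pos_of_mem_Ioo
      (show t ∈ Ioo (-(Real.pi / 2)) (Real.pi / 2) from ⟨by linarith [ht.1], ht.2⟩)
    linarith
  · intro t ht
    have h := Real.cos_neg_of_pi_div_two_lt_of_lt ht.1 (by linarith [ht.2])
    linarith
end
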